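/- Assume regularity condition (H). Let p_M ∈ (0,1) satisfy 1 − F(p_M) = p_M·f(p_M), let p_B ∈ (0,1) satisfy D_B(p_B) = 0, and let p_V ∈ (0,1) satisfy D_V(p_V) = 0. Then p_M ≤ p_B ≤ p_V. Consequently, total consumer surplus CS(p) = (1−λ)·∫_p^1 (v−p) f(v) dv + λ·∫_p^1 (v−p)·J·F(v)^{J−1}·f(v) dv and total welfare W(p) = (1−λ)·∫_p^1 v f(v) dv + λ·∫₀¹ v·J·F(v)^{J−1}·f(v) dv satisfy CS(p_V) ≤ CS(p_B) and W(p_V) ≤ W(p_B). (Posted prices in the optimal sophisticated managed campaign are higher, and consumer surplus and welfare lower, than under data-augmented bidding.) -/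
import Mathlib


open intervalIntegral

/-- p_M ≤ p_B ≤ p_V: posted prices in the optimal sophisticated
managed campaign are higher than under data-augmented bidding, which are
higher than the monopoly price; hence consumer surplus and welfare are lower
in the managed campaign. -/
theorem managed_campaign_prices_highest
    (f F : ℝ → ℝ)
    (hf_cont : ContinuousOn f (Set.Icc 0 1))
    (hf_pos : ∀ x ∈ Set.Icc (0:ℝ) 1, 0 < f x)
    (hf_logconcave : ConcaveOn ℝ (Set.Icc 0 1) (Real.log ∘ f))
    (hf_int : (∫ t in (0:ℝ)..1, f t) = 1)
    (hF : ∀ x, F x = ∫ t in (0:ℝ)..x, f t)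
    (J : ℕ) (hJ : 2 ≤ J)
    (lam : ℝ) (hlam : lam ∈ Set.Ioo (0:ℝ) 1)
    (hreg : AntitoneOn (fun p : ℝ => 1 - F p - p * f p) (Set.Icc 0 1))
    (pM pB pV : ℝ)
    (hpM : pM ∈ Set.Ioo (0:ℝ) 1) (hpB : pB ∈ Set.Ioo (0:ℝ) 1)
    (hpV : pV ∈ Set.Ioo (0:ℝ) 1)
    (hM : 1 - F pM = pM * f pM)
    (hB : (1 - lam) * (1 - F pB - pB * f pB)
        + lam * (J : ℝ) * (∫ v in pB..1, F (v - pB) ^ (J - 1) * f v) = 0)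
    (hV : (1 - lam) * (1 - F pV - pV * f pV)
        + lam * (J : ℝ) * (∫ v in pV..1, F v ^ (J - 1) * f v) = 0)
    (CS W : ℝ → ℝ)
    (hCS : ∀ p, CS p = (1 - lam) * (∫ v in p..1, (v - p) * f v)
        + lam * ∫ v in p..1, (v - p) * ((J : ℝ) * F v ^ (J - 1) * f v))
    (hW : ∀ p, W p = (1 - lam) * (∫ v in p..1, v * f v)
        + lam * ∫ v in (0:ℝ)..1, v * ((J : ℝ) * F v ^ (J - 1) * f v)) :
    pM ≤ pB ∧ pB ≤ pV ∧ CS pV ≤ CS pB ∧ W pV ≤ W pB := by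
  obtain ⟨hlam0, hlam1⟩ := hlam
  obtain ⟨hpM0, hpM1⟩ := hpM
  obtain ⟨hpB0, hpB1⟩ := hpB
  obtain ⟨hpV0, hpV1⟩ := hpV
  have h1lam : (0:ℝ) < 1 - lam := by linarith
  have hJpos : (0:ℝ) < (J : ℝ) := by
    have : (0:ℕ) < J := by omega
    exact_mod_cast this
  have huIcc : Set.uIcc (0:ℝ) 1 = Set.Icc 0 1 := Set.uIcc_of_le (by norm_num)
  -- integrability of f on subintervals
  have hfi : ∀ a b : ℝ, a ∈ Set.Icc (0:ℝ) 1 → b ∈ Set.Icc (0:ℝ) 1 →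
      IntervalIntegrable f MeasureTheory.volume a b := by
    intro a b ha hb
    apply ContinuousOn.intervalIntegrable
    apply hf_cont.mono
    rw [← huIcc]
    exact Set.uIcc_subset_uIcc (huIcc ▸ ha) (huIcc ▸ hb)
  -- F as a difference of integrals
  have hFsub : ∀ a b : ℝ, a ∈ Set.Icc (0:ℝ) 1 → b ∈ Set.Icc (0:ℝ) 1 →
      F b - F a = ∫ t in a..b, f t := by
    intro a b ha hb
    have h0 : (0:ℝ) ∈ Set.Icc (0:ℝ) 1 := by norm_num
    have := intervalIntegral.integral_add_adjacent_intervals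
      (hfi 0 a h0 ha) (hfi a b ha hb)
    rw [hF a, hF b]
    linarith
  have hFlt : ∀ a b : ℝ, a ∈ Set.Icc (0:ℝ) 1 → b ∈ Set.Icc (0:ℝ) 1 → a < b → F a < F b := by
    intro a b ha hb hab
    have hpos : (0:ℝ) < ∫ t in a..b, f t := by
      apply intervalIntegral_pos_of_pos_on (hfi a b ha hb) _ hab
      intro x hx
      exact hf_pos x ⟨le_of_lt (lt_of_le_of_lt ha.1 hx.1), le_of_lt (lt_of_lt_of_le hx.2 hb.2)⟩
    have := hFsub a b ha hb
    linarith
  have hF0 : F 0 = 0 := by rw [hF 0, intervalIntegral.integral_same]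
  have hFnonneg : ∀ x ∈ Set.Icc (0:ℝ) 1, 0 ≤ F x := by
    intro x hx
    rcases eq_or_lt_of_le hx.1 with h | h
    · rw [← h, hF0]
    · have := hFlt 0 x (by norm_num) hx h
      linarith [hF0]
  have hFpos : ∀ x : ℝ, 0 < x → x ≤ 1 → 0 < F x := by
    intro x hx0 hx1
    have := hFlt 0 x (by norm_num) ⟨le_of_lt hx0, hx1⟩ hx0
    linarith [hF0]
  -- continuity of F
  have hFcont : ContinuousOn F (Set.Icc 0 1) := by
    have h0 : (0:ℝ) ∈ Set.uIcc (0:ℝ) 1 := Set.left_mem_uIcc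
    have hc := intervalIntegral.continuousOn_primitive_interval'
      (hfi 0 1 (by norm_num) (by norm_num)) h0
    rw [huIcc] at hc
    exact hc.congr fun x _ => hF x
  -- the bidding integrand is positive
  have hBintcont : ContinuousOn (fun v => F (v - pB) ^ (J - 1) * f v) (Set.Icc pB 1) := by
    have hmap : Set.MapsTo (fun v : ℝ => v - pB) (Set.Icc pB 1) (Set.Icc 0 1) := by
      intro v hv
      simp only [Set.mem_Icc] at hv ⊢
      constructor
      · linarith [hv.1]
      · linarith [hv.2]
    have hsub : Set.Icc pB 1 ⊆ Set.Icc (0:ℝ) 1 := Set.Icc_subset_Icc (le_of_lt hpB0) le_rfl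
    exact ((hFcont.comp ((continuous_sub_right pB).continuousOn) hmap).pow _).mul
      (hf_cont.mono hsub)
  have hIBpos : 0 < ∫ v in pB..1, F (v - pB) ^ (J - 1) * f v := by
    apply intervalIntegral_pos_of_pos_on
    · apply ContinuousOn.intervalIntegrable
      rwa [Set.uIcc_of_le (le_of_lt hpB1)]
    · intro v hv
      have hfv : 0 < f v := hf_pos v ⟨by linarith [hv.1], le_of_lt hv.2⟩
      have hFv : 0 < F (v - pB) := hFpos _ (by linarith [hv.1]) (by linarith [hv.2])
      positivity
    · exact hpB1
  -- p_M ≤ p_B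
  have hMB : pM ≤ pB := by
    by_contra h
    push_neg at h
    have hGB : 1 - F pB - pB * f pB < 0 := by
      nlinarith [mul_pos (mul_pos hlam0 hJpos) hIBpos]
    have := hreg ⟨le_of_lt hpB0, le_of_lt hpB1⟩ ⟨le_of_lt hpM0, le_of_lt hpM1⟩ (le_of_lt h)
    simp only at this
    linarith
  -- the best-value integrand, continuity
  have hVintcont : ContinuousOn (fun v => F v ^ (J - 1) * f v) (Set.Icc (0:ℝ) 1) :=
    (hFcont.pow _).mul hf_cont
  have hVint : ∀ a b : ℝ, a ∈ Set.Icc (0:ℝ) 1 → b ∈ Set.Icc (0:ℝ) 1 →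
      IntervalIntegrable (fun v => F v ^ (J - 1) * f v) MeasureTheory.volume a b := by
    intro a b ha hb
    apply ContinuousOn.intervalIntegrable
    apply hVintcont.mono
    rw [← huIcc]
    exact Set.uIcc_subset_uIcc (huIcc ▸ ha) (huIcc ▸ hb)
  -- p_B ≤ p_V
  have hBV : pB ≤ pV := by
    by_contra h
    push_neg at h
    -- split the best-value integral
    have hsplit : (∫ v in pV..pB, F v ^ (J - 1) * f v) + (∫ v in pB..1, F v ^ (J - 1) * f v)
        = ∫ v in pV..1, F v ^ (J - 1) * f v :=
      intervalIntegral.integral_add_adjacent_intervals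
        (hVint pV pB ⟨le_of_lt hpV0, le_of_lt hpV1⟩ ⟨le_of_lt hpB0, le_of_lt hpB1⟩)
        (hVint pB 1 ⟨le_of_lt hpB0, le_of_lt hpB1⟩ (by norm_num))
    have hNN : 0 ≤ ∫ v in pV..pB, F v ^ (J - 1) * f v := by
      apply intervalIntegral.integral_nonneg (le_of_lt h)
      intro u hu
      have hu0 : (0:ℝ) ≤ u := le_trans (le_of_lt hpV0) hu.1
      have hu1 : u ≤ 1 := le_trans hu.2 (le_of_lt hpB1)
      have := hf_pos u ⟨hu0, hu1⟩
      have := hFnonneg u ⟨hu0, hu1⟩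
      positivity
    -- strict comparison on [pB, 1]
    have hstrict : (∫ v in pB..1, F (v - pB) ^ (J - 1) * f v)
        < ∫ v in pB..1, F v ^ (J - 1) * f v := by
      have hdiff : 0 < ∫ v in pB..1, (F v ^ (J - 1) * f v - F (v - pB) ^ (J - 1) * f v) := by
        apply intervalIntegral_pos_of_pos_on
        · apply ContinuousOn.intervalIntegrable
          rw [Set.uIcc_of_le (le_of_lt hpB1)]
          exact (hVintcont.mono (Set.Icc_subset_Icc (le_of_lt hpB0) le_rfl)).sub hBintcont
        · intro v hv
          have hfv : 0 < f v := hf_pos v ⟨by linarith [hv.1], le_of_lt hv.2⟩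
          have hkey : F (v - pB) < F v :=
            hFlt (v - pB) v ⟨by linarith [hv.1], by linarith [hv.2]⟩
              ⟨by linarith [hv.1], le_of_lt hv.2⟩ (by linarith)
          have hnn : 0 ≤ F (v - pB) := hFnonneg _ ⟨by linarith [hv.1], by linarith [hv.2]⟩
          have hpow : F (v - pB) ^ (J - 1) < F v ^ (J - 1) :=
            pow_lt_pow_left₀ hkey hnn (by omega)
          nlinarith
        · exact hpB1
      have hBii : IntervalIntegrable (fun v => F (v - pB) ^ (J - 1) * f v)
          MeasureTheory.volume pB 1 := by
        apply ContinuousOn.intervalIntegrable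
        rwa [Set.uIcc_of_le (le_of_lt hpB1)]
      have heq := intervalIntegral.integral_sub
        (hVint pB 1 ⟨le_of_lt hpB0, le_of_lt hpB1⟩ (by norm_num)) hBii
      rw [heq] at hdiff
      linarith
    have hle : (1 - F pB - pB * f pB) ≤ (1 - F pV - pV * f pV) := by
      have := hreg ⟨le_of_lt hpV0, le_of_lt hpV1⟩ ⟨le_of_lt hpB0, le_of_lt hpB1⟩ (le_of_lt h)
      simpa using this
    have hmul := mul_le_mul_of_nonneg_left hle (le_of_lt h1lam)
    have hprod : lam * (J : ℝ) * (∫ v in pV..1, F v ^ (J - 1) * f v)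
        ≤ lam * (J : ℝ) * (∫ v in pB..1, F (v - pB) ^ (J - 1) * f v) := by linarith
    have := le_of_mul_le_mul_left
      (by linarith : lam * (J : ℝ) * (∫ v in pV..1, F v ^ (J - 1) * f v)
        ≤ lam * (J : ℝ) * (∫ v in pB..1, F (v - pB) ^ (J - 1) * f v))
      (mul_pos hlam0 hJpos)
    linarith
  -- generic monotonicity of consumer-surplus-type integrals
  have key : ∀ g : ℝ → ℝ, ContinuousOn g (Set.Icc 0 1) → (∀ v ∈ Set.Icc (0:ℝ) 1, 0 ≤ g v) →
      (∫ v in pV..1, (v - pV) * g v) ≤ ∫ v in pB..1, (v - pB) * g v := by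
    intro g hgc hgnn
    have hint : ∀ c a b : ℝ, a ∈ Set.Icc (0:ℝ) 1 → b ∈ Set.Icc (0:ℝ) 1 →
        IntervalIntegrable (fun v => (v - c) * g v) MeasureTheory.volume a b := by
      intro c a b ha hb
      apply ContinuousOn.intervalIntegrable
      apply (((continuous_sub_right c).continuousOn).mul hgc).mono
      rw [← huIcc]
      exact Set.uIcc_subset_uIcc (huIcc ▸ ha) (huIcc ▸ hb)
    have hVmem : pV ∈ Set.Icc (0:ℝ) 1 := ⟨le_of_lt hpV0, le_of_lt hpV1⟩
    have hBmem : pB ∈ Set.Icc (0:ℝ) 1 := ⟨le_of_lt hpB0, le_of_lt hpB1⟩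
    have h1mem : (1:ℝ) ∈ Set.Icc (0:ℝ) 1 := by norm_num
    have step1 : (∫ v in pV..1, (v - pV) * g v) ≤ ∫ v in pV..1, (v - pB) * g v := by
      apply intervalIntegral.integral_mono_on (le_of_lt hpV1)
        (hint pV pV 1 hVmem h1mem) (hint pB pV 1 hVmem h1mem)
      intro x hx
      have hgx : 0 ≤ g x := hgnn x ⟨le_trans hVmem.1 hx.1, hx.2⟩
      have : x - pV ≤ x - pB := by linarith
      exact mul_le_mul_of_nonneg_right this hgx
    have hsplit : (∫ v in pB..pV, (v - pB) * g v) + (∫ v in pV..1, (v - pB) * g v)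
        = ∫ v in pB..1, (v - pB) * g v :=
      intervalIntegral.integral_add_adjacent_intervals
        (hint pB pB pV hBmem hVmem) (hint pB pV 1 hVmem h1mem)
    have hNN : 0 ≤ ∫ v in pB..pV, (v - pB) * g v := by
      apply intervalIntegral.integral_nonneg hBV
      intro u hu
      have hgu : 0 ≤ g u := hgnn u ⟨le_trans hBmem.1 hu.1, le_trans hu.2 hVmem.2⟩
      have : 0 ≤ u - pB := by linarith [hu.1]
      positivity
    linarith
  -- consumer surplus comparison
  have hCSle : CS pV ≤ CS pB := by
    rw [hCS pV, hCS pB]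
    have k1 := key f hf_cont (fun v hv => le_of_lt (hf_pos v hv))
    have k2 := key (fun v => (J : ℝ) * F v ^ (J - 1) * f v)
      ((continuousOn_const.mul (hFcont.pow _)).mul hf_cont)
      (fun v hv => by
        have := hf_pos v hv
        have := hFnonneg v hv
        positivity)
    have h1 : (1 - lam) * (∫ v in pV..1, (v - pV) * f v)
        ≤ (1 - lam) * (∫ v in pB..1, (v - pB) * f v) :=
      mul_le_mul_of_nonneg_left k1 (le_of_lt h1lam)
    have h2 : lam * (∫ v in pV..1, (v - pV) * ((J : ℝ) * F v ^ (J - 1) * f v))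
        ≤ lam * (∫ v in pB..1, (v - pB) * ((J : ℝ) * F v ^ (J - 1) * f v)) :=
      mul_le_mul_of_nonneg_left (k2) (le_of_lt hlam0)
    linarith
  -- welfare comparison
  have hWle : W pV ≤ W pB := by
    rw [hW pV, hW pB]
    have hint : ∀ a b : ℝ, a ∈ Set.Icc (0:ℝ) 1 → b ∈ Set.Icc (0:ℝ) 1 →
        IntervalIntegrable (fun v => v * f v) MeasureTheory.volume a b := by
      intro a b ha hb
      apply ContinuousOn.intervalIntegrable
      apply (continuousOn_id.mul hf_cont).mono
      rw [← huIcc]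
      exact Set.uIcc_subset_uIcc (huIcc ▸ ha) (huIcc ▸ hb)
    have hVmem : pV ∈ Set.Icc (0:ℝ) 1 := ⟨le_of_lt hpV0, le_of_lt hpV1⟩
    have hBmem : pB ∈ Set.Icc (0:ℝ) 1 := ⟨le_of_lt hpB0, le_of_lt hpB1⟩
    have hsplit : (∫ v in pB..pV, v * f v) + (∫ v in pV..1, v * f v)
        = ∫ v in pB..1, v * f v :=
      intervalIntegral.integral_add_adjacent_intervals
        (hint pB pV hBmem hVmem) (hint pV 1 hVmem (by norm_num))
    have hNN : 0 ≤ ∫ v in pB..pV, v * f v := by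
      apply intervalIntegral.integral_nonneg hBV
      intro u hu
      have hu0 : (0:ℝ) ≤ u := le_trans hBmem.1 hu.1
      have := hf_pos u ⟨hu0, le_trans hu.2 hVmem.2⟩
      positivity
    have : (∫ v in pV..1, v * f v) ≤ ∫ v in pB..1, v * f v := by linarith
    nlinarith [mul_le_mul_of_nonneg_left this (le_of_lt h1lam)]
  exact ⟨hMB, hBV, hCSle, hWle⟩
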